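/- For any valid Chung-Graham representation (a_i) of n with highest nonzero index 2m (so a_{2m} ∈ {1,2}), we have F_{2m+2} ≤ n < F_{2m+4}. -/

import Mathlib

/-- The value represented by a finitely supported digit sequence:
    `∑ i, a i * F (i+2)` where `F` is the Fibonacci sequence. -/
def fibVal (a : ℕ →₀ ℕ) : ℕ := a.sum fun i c => c * Nat.fib (i + 2)

/-- Zeckendorf conditions: binary digits with no two consecutive 1's. -/
def IsZeckendorf (a : ℕ →₀ ℕ) : Prop :=
  (∀ i, a i ≤ 1) ∧ (∀ i, a i * a (i + 1) = 0)

/-- Chung-Graham conditions: digits in {0,1,2}, zero at odd indices, and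
    between any two even indices carrying digit 2 there is an even index
    carrying digit 0. -/
def IsChungGraham (a : ℕ →₀ ℕ) : Prop :=
  (∀ i, a i ≤ 2) ∧ (∀ i, Odd i → a i = 0) ∧
  (∀ i j, Even i → Even j → i < j → a i = 2 → a j = 2 →
    ∃ k, Even k ∧ i < k ∧ k < j ∧ a k = 0)

/-- The `cgsplit` rule: digit 0 ↦ (0,0), 1 ↦ (0,1), 2 ↦ (1,1). -/
def IsSplit (a b c : ℕ →₀ ℕ) : Prop :=
  ∀ i, (a i = 0 → b i = 0 ∧ c i = 0) ∧
       (a i = 1 → b i = 0 ∧ c i = 1) ∧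
       (a i = 2 → b i = 1 ∧ c i = 1)

/-- Sum of a block of digits that are all ≤ 1 (and zero at odd indices). -/
lemma sum_ico_bound (a : ℕ →₀ ℕ) (hodd : ∀ i, Odd i → a i = 0) (s : ℕ) :
    ∀ d, (∀ i ∈ Finset.Ico (2*s) (2*(s+d)), a i ≤ 1) →
    (∑ i ∈ Finset.Ico (2*s) (2*(s+d)), a i * Nat.fib (i+2)) + Nat.fib (2*s+1)
      ≤ Nat.fib (2*(s+d)+1) := by
  intro d
  induction d with
  | zero => simp
  | succ d IH =>
    intro h1
    have h1' : ∀ i ∈ Finset.Ico (2*s) (2*(s+d)), a i ≤ 1 := by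
      intro i hi
      rcases Finset.mem_Ico.mp hi with ⟨hi1, hi2⟩
      exact h1 i (Finset.mem_Ico.mpr ⟨hi1, by omega⟩)
    have hsplit : ∑ i ∈ Finset.Ico (2*s) (2*(s+(d+1))), a i * Nat.fib (i+2)
        = ((∑ i ∈ Finset.Ico (2*s) (2*(s+d)), a i * Nat.fib (i+2))
          + a (2*(s+d)) * Nat.fib (2*(s+d)+2))
          + a (2*(s+d)+1) * Nat.fib (2*(s+d)+1+2) := by
      have e1 : 2*(s+(d+1)) = (2*(s+d)+1) + 1 := by ring
      rw [e1, Finset.sum_Ico_succ_top (by omega), Finset.sum_Ico_succ_top (by omega)]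
    have hz : a (2*(s+d)+1) = 0 := hodd _ ⟨s+d, by ring⟩
    have ht : a (2*(s+d)) ≤ 1 := h1 _ (Finset.mem_Ico.mpr ⟨by omega, by omega⟩)
    have hIH := IH h1'
    have hf1 : Nat.fib (2*(s+(d+1))+1) = Nat.fib (2*(s+d)+1) + Nat.fib (2*(s+d)+2) := by
      rw [show 2*(s+(d+1))+1 = (2*(s+d)+1) + 2 from by ring, Nat.fib_add_two]
    have hterm : a (2*(s+d)) * Nat.fib (2*(s+d)+2) ≤ Nat.fib (2*(s+d)+2) := by
      calc a (2*(s+d)) * Nat.fib (2*(s+d)+2) ≤ 1 * Nat.fib (2*(s+d)+2) :=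
            Nat.mul_le_mul_right _ ht
        _ = Nat.fib (2*(s+d)+2) := one_mul _
    rw [hsplit, hz]
    omega

lemma cg_key (a : ℕ →₀ ℕ) (hle : ∀ i, a i ≤ 2) (hodd : ∀ i, Odd i → a i = 0)
    (h2 : ∀ i j, Even i → Even j → i < j → a i = 2 → a j = 2 →
      ∃ k, Even k ∧ i < k ∧ k < j ∧ a k = 0) (m : ℕ) :
    (∑ i ∈ Finset.range (2*m+1), a i * Nat.fib (i+2)) < Nat.fib (2*m+4) := by
  induction m using Nat.strong_induction_on with
  | _ m IH =>
  match m with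
  | 0 =>
    have h0 := hle 0
    have h4 : Nat.fib 4 = 3 := by decide
    have h2' : Nat.fib 2 = 1 := by decide
    simp only [Finset.range_one, Finset.sum_singleton, Nat.mul_zero, Nat.zero_add,
      Nat.zero_add, h2', h4, Nat.mul_one]
    omega
  | n + 1 =>
    have hsplit : ∑ i ∈ Finset.range (2*(n+1)+1), a i * Nat.fib (i+2)
        = ((∑ i ∈ Finset.range (2*n+1), a i * Nat.fib (i+2))
          + a (2*n+1) * Nat.fib (2*n+3))
          + a (2*n+2) * Nat.fib (2*n+4) := by
      rw [show 2*(n+1)+1 = (2*n+2) + 1 from by ring, Finset.sum_range_succ,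
        Finset.sum_range_succ, show 2*n+1+2 = 2*n+3 from by ring,
        show 2*n+2+2 = 2*n+4 from by ring]
    have hz1 : a (2*n+1) = 0 := hodd _ ⟨n, by ring⟩
    have hfa : Nat.fib (2*(n+1)+4) = Nat.fib (2*n+4) + Nat.fib (2*n+5) := by
      rw [show 2*(n+1)+4 = (2*n+4) + 2 from by ring, Nat.fib_add_two]
    have hfb : Nat.fib (2*n+5) = Nat.fib (2*n+3) + Nat.fib (2*n+4) := by
      rw [show 2*n+5 = (2*n+3) + 2 from by ring, Nat.fib_add_two]
    have hfc : Nat.fib (2*n+4) = Nat.fib (2*n+2) + Nat.fib (2*n+3) := by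
      rw [show 2*n+4 = (2*n+2) + 2 from by ring, Nat.fib_add_two]
    have hfd : Nat.fib (2*n+3) = Nat.fib (2*n+1) + Nat.fib (2*n+2) := by
      rw [show 2*n+3 = (2*n+1) + 2 from by ring, Nat.fib_add_two]
    by_cases htop : a (2*n+2) ≤ 1
    · have hIH := IH n (by omega)
      have hterm : a (2*n+2) * Nat.fib (2*n+4) ≤ Nat.fib (2*n+4) := by
        calc a (2*n+2) * Nat.fib (2*n+4) ≤ 1 * Nat.fib (2*n+4) :=
              Nat.mul_le_mul_right _ htop
          _ = Nat.fib (2*n+4) := one_mul _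
      rw [hsplit, hz1]
      omega
    · have htop2 : a (2*n+2) = 2 := by have := hle (2*n+2); omega
      by_cases hZ : ((Finset.range (2*n+2)).filter (fun k => Even k ∧ a k = 0)).Nonempty
      · -- there is an even zero below the top; take the largest one, k = 2t
        set Z : Finset ℕ := (Finset.range (2*n+2)).filter (fun k => Even k ∧ a k = 0)
        have hkmem := Finset.mem_filter.mp (Z.max'_mem hZ)
        have hkmax : ∀ z ∈ Z, z ≤ Z.max' hZ := fun z hz => Z.le_max' z hz
        obtain ⟨hklt', ⟨hkeven, hkzero⟩⟩ := hkmem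
        have hklt := Finset.mem_range.mp hklt'
        obtain ⟨t, ht⟩ := hkeven
        have hkt : Z.max' hZ = 2*t := by omega
        have htn : t ≤ n := by omega
        -- digits strictly between 2t and 2n+2 are ≤ 1
        have hblock : ∀ i ∈ Finset.Ico (2*(t+1)) (2*((t+1)+(n-t))), a i ≤ 1 := by
          intro i hi
          rcases Finset.mem_Ico.mp hi with ⟨hi1, hi2⟩
          rcases Nat.even_or_odd i with hie | hio
          · by_contra hcon
            have hi2' : a i = 2 := by have := hle i; omega
            obtain ⟨z, hze, hza, hzb, hz0⟩ := h2 i (2*n+2) hie ⟨n+1, by ring⟩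
              (by omega) hi2' htop2
            have hzZ : z ∈ Z :=
              Finset.mem_filter.mpr ⟨Finset.mem_range.mpr (by omega), hze, hz0⟩
            have := hkmax z hzZ
            omega
          · rw [hodd i hio]
            omega
        have hB := sum_ico_bound a hodd (t+1) (n-t) hblock
        rw [show 2*((t+1)+(n-t)) = 2*n+2 from by omega,
          show 2*n+2+1 = 2*n+3 from by ring,
          show 2*(t+1) = 2*t+2 from by ring,
          show 2*t+2+1 = 2*t+3 from by ring] at hB
        -- low part
        have hA : (∑ i ∈ Finset.range (2*t), a i * Nat.fib (i+2)) < Nat.fib (2*t+2) := by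
          match t, htn with
          | 0, _ =>
            simp only [Nat.mul_zero, Finset.range_zero, Finset.sum_empty]
            decide
          | t' + 1, htn' =>
            have hIH := IH t' (by omega)
            have hsp : ∑ i ∈ Finset.range (2*(t'+1)), a i * Nat.fib (i+2)
                = (∑ i ∈ Finset.range (2*t'+1), a i * Nat.fib (i+2))
                  + a (2*t'+1) * Nat.fib (2*t'+1+2) := by
              rw [show 2*(t'+1) = (2*t'+1) + 1 from by ring, Finset.sum_range_succ]
            have hz' : a (2*t'+1) = 0 := hodd _ ⟨t', by ring⟩
            rw [hsp, hz', show 2*(t'+1)+2 = 2*t'+4 from by ring]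
            omega
        -- assemble
        have hmid0 : a (2*t) = 0 := by rw [← hkt]; exact hkzero
        have hmid1 : a (2*t+1) = 0 := hodd _ ⟨t, by ring⟩
        have hsplit2 : ∑ i ∈ Finset.range (2*n+1), a i * Nat.fib (i+2)
            = (∑ i ∈ Finset.range (2*t), a i * Nat.fib (i+2))
              + (∑ i ∈ Finset.Ico (2*t) (2*n+1), a i * Nat.fib (i+2)) := by
          rw [Finset.range_eq_Ico,
            ← Finset.sum_Ico_consecutive _ (by omega : 0 ≤ 2*t) (by omega : 2*t ≤ 2*n+1),
            ← Finset.range_eq_Ico]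
        have hsplit3 : ∑ i ∈ Finset.Ico (2*t) (2*n+2), a i * Nat.fib (i+2)
            = (∑ i ∈ Finset.Ico (2*t) (2*t+2), a i * Nat.fib (i+2))
              + (∑ i ∈ Finset.Ico (2*t+2) (2*n+2), a i * Nat.fib (i+2)) := by
          rw [← Finset.sum_Ico_consecutive _ (by omega : 2*t ≤ 2*t+2)
            (by omega : 2*t+2 ≤ 2*n+2)]
        have hsmall : (∑ i ∈ Finset.Ico (2*t) (2*t+2), a i * Nat.fib (i+2)) = 0 := by
          rw [show Finset.Ico (2*t) (2*t+2) = {2*t, 2*t+1} from by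
            ext x; simp only [Finset.mem_Ico, Finset.mem_insert, Finset.mem_singleton]; omega]
          simp [hmid0, hmid1]
        have hsub2 : ∑ i ∈ Finset.Ico (2*t) (2*n+1), a i * Nat.fib (i+2)
            ≤ ∑ i ∈ Finset.Ico (2*t) (2*n+2), a i * Nat.fib (i+2) :=
          Finset.sum_le_sum_of_subset (Finset.Ico_subset_Ico_right (by omega))
        have hmono : Nat.fib (2*t+2) ≤ Nat.fib (2*t+3) := Nat.fib_le_fib_succ
        rw [hsplit3, hsmall] at hsub2
        rw [hsplit, hz1, hsplit2, htop2]
        omega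
      · -- no even zero below the top: all lower digits are ≤ 1
        have hblock : ∀ i ∈ Finset.Ico (2*0) (2*(0+(n+1))), a i ≤ 1 := by
          intro i hi
          rcases Finset.mem_Ico.mp hi with ⟨hi1, hi2⟩
          rcases Nat.even_or_odd i with hie | hio
          · by_contra hcon
            have hi2' : a i = 2 := by have := hle i; omega
            obtain ⟨z, hze, hza, hzb, hz0⟩ := h2 i (2*n+2) hie ⟨n+1, by ring⟩
              (by omega) hi2' htop2
            exact hZ ⟨z, Finset.mem_filter.mpr ⟨Finset.mem_range.mpr (by omega), hze, hz0⟩⟩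
          · rw [hodd i hio]
            omega
        have hB := sum_ico_bound a hodd 0 (n+1) hblock
        rw [show 2*(0+(n+1)) = 2*n+2 from by omega, show 2*n+2+1 = 2*n+3 from by ring,
          show 2*0 = 0 from by ring, show 2*0+1 = 1 from by ring] at hB
        have hsplit4 : ∑ i ∈ Finset.Ico 0 (2*n+2), a i * Nat.fib (i+2)
            = (∑ i ∈ Finset.Ico 0 (2*n+1), a i * Nat.fib (i+2))
              + a (2*n+1) * Nat.fib (2*n+1+2) := by
          rw [Finset.sum_Ico_succ_top (by omega)]
        rw [hz1, Nat.zero_mul, Nat.add_zero, ← Finset.range_eq_Ico] at hsplit4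
        rw [← Finset.range_eq_Ico, hsplit4] at hB
        have hf1 : Nat.fib 1 = 1 := by decide
        rw [hsplit, hz1, htop2]
        rw [← Finset.range_eq_Ico] at hB
        omega

theorem chung_graham_bounds (a : ℕ →₀ ℕ) (m : ℕ)
    (ha : IsChungGraham a) (htop : a (2 * m) ≠ 0)
    (hhigh : ∀ i, 2 * m < i → a i = 0) :
    Nat.fib (2 * m + 2) ≤ fibVal a ∧ fibVal a < Nat.fib (2 * m + 4) := by
  obtain ⟨hle, hodd, h2⟩ := ha
  have hsub : a.support ⊆ Finset.range (2*m+1) := by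
    intro i hi
    rw [Finsupp.mem_support_iff] at hi
    rw [Finset.mem_range]
    by_contra hcon
    exact hi (hhigh i (by omega))
  have hval : fibVal a = ∑ i ∈ Finset.range (2*m+1), a i * Nat.fib (i+2) := by
    exact Finsupp.sum_of_support_subset a hsub _ (fun i _ => by simp)
  constructor
  · rw [hval]
    have hmem : 2*m ∈ Finset.range (2*m+1) := Finset.mem_range.mpr (by omega)
    have hterm : Nat.fib (2*m+2) ≤ a (2*m) * Nat.fib (2*m+2) := by
      have h1 : 1 ≤ a (2*m) := Nat.one_le_iff_ne_zero.mpr htop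
      calc Nat.fib (2*m+2) = 1 * Nat.fib (2*m+2) := (one_mul _).symm
        _ ≤ a (2*m) * Nat.fib (2*m+2) := Nat.mul_le_mul_right _ h1
    exact hterm.trans (Finset.single_le_sum (f := fun i => a i * Nat.fib (i+2)) (fun i _ => Nat.zero_le _) hmem)
  · rw [hval]
    exact cg_key a hle hodd h2 m
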